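/- Let R be a finite Frobenius ring (i.e., a finite ring admitting a generating character), let C ⊆ R^n be a code, and let f : C → R^n be a left R-linear map preserving the Rosenbloom–Tsfasman weight, i.e., wt_RT(f(x)) = wt_RT(x) for all x ∈ C. Then f is a global LT(n,R)-map: there exists an invertible lower triangular matrix M ∈ LT(n,R) such that f(x) = x·M for all x ∈ C. In particular, f extends to a wt_RT-preserving R-linear automorphism of R^n. -/

import Mathlib

open Matrix
open scoped Classical

noncomputable section

/-- `χ` is a generating character of the finite ring `R`. -/
def IsGeneratingChar {R : Type*} [Ring R] [Fintype R] (χ : AddChar R ℂ) : Prop :=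
  ∀ ψ : AddChar R ℂ, ∃! r : R, ∀ x : R, ψ x = χ (x * r)

/-- A finite ring is Frobenius iff it admits a generating character. -/
def IsFrobeniusRing (R : Type*) [Ring R] [Fintype R] : Prop :=
  ∃ χ : AddChar R ℂ, IsGeneratingChar χ

/-- The Rosenbloom–Tsfasman weight: `wt_RT(x) = 0` if `x = 0`, and otherwise the largest
(1-based) index `i` with `x_i ≠ 0`. -/
def wtRT {R : Type*} [Ring R] {n : ℕ} (x : Fin n → R) : ℕ :=
  (Finset.univ.filter fun i : Fin n => x i ≠ 0).sup fun i : Fin n => (i : ℕ) + 1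


section CharExt

/-- `ℂˣ` is `ℕ`-rootable. -/
noncomputable def complexUnitsRootableNat : RootableBy ℂˣ ℕ :=
  rootableByOfPowLeftSurj _ _ (fun {n} hn z => by
    obtain ⟨w, hw⟩ := IsAlgClosed.exists_pow_nat_eq (z : ℂ) (Nat.pos_of_ne_zero hn)
    have hw0 : w ≠ 0 := by
      intro h
      rw [h, zero_pow hn] at hw
      exact z.ne_zero hw.symm
    refine ⟨Units.mk0 w hw0, ?_⟩
    ext
    simpa using hw)

noncomputable def complexUnitsRootableInt : RootableBy ℂˣ ℤ :=
  letI := complexUnitsRootableNat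
  Group.rootableByIntOfRootableByNat ℂˣ

noncomputable instance additiveComplexUnitsDivisible : DivisibleBy (Additive ℂˣ) ℤ :=
  letI := complexUnitsRootableInt
  { div := fun a n => Additive.ofMul (RootableBy.root a.toMul n)
    div_zero := fun a => congrArg Additive.ofMul (RootableBy.root_zero a.toMul)
    div_cancel := fun {n} a hn => by
      have := RootableBy.root_cancel (α := ℤ) a.toMul hn
      apply Additive.toMul.injective
      simpa using this }

universe u
noncomputable instance uliftAdditiveComplexUnitsDivisible :
    DivisibleBy (ULift.{u} (Additive ℂˣ)) ℤ where
  div a n := ULift.up (DivisibleBy.div a.down n)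
  div_zero a := congrArg ULift.up (DivisibleBy.div_zero a.down)
  div_cancel {n} a hn := by
    have := DivisibleBy.div_cancel a.down hn
    apply ULift.ext
    simpa using this

/-- Extension of `Additive ℂˣ`-valued homs along injections of abelian groups. -/
theorem addHom_extend {A : Type*} [AddCommGroup A] (B : AddSubgroup A)
    (g : ↥B →+ Additive ℂˣ) : ∃ G : A →+ Additive ℂˣ, ∀ b : ↥B, G ↑b = g b := by
  classical
  set Q := ULift (Additive ℂˣ)
  have hinj : Module.Injective ℤ Q := (Module.Baer.of_divisible Q).injective
  obtain ⟨h, hh⟩ := hinj.out B.subtype.toIntLinearMap Subtype.val_injective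
    ((AddMonoidHom.comp ⟨⟨ULift.up, rfl⟩, fun _ _ => rfl⟩ g).toIntLinearMap)
  refine ⟨(AddMonoidHom.comp ⟨⟨ULift.down, rfl⟩, fun _ _ => rfl⟩ h.toAddMonoidHom), fun b => ?_⟩
  have := hh b
  simp only [AddMonoidHom.coe_toIntLinearMap, AddMonoidHom.coe_comp] at this ⊢
  exact congrArg ULift.down this

end CharExt



section CharTools

variable {A : Type*} [AddCommGroup A]

/-- Package an `ℂ`-valued additive character as a hom into `Additive ℂˣ`. -/
def charToHom (χ : AddChar A ℂ) : A →+ Additive ℂˣ where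
  toFun a := Additive.ofMul (Units.mk (χ a) (χ (-a))
    (by rw [← AddChar.map_add_eq_mul, add_neg_cancel, AddChar.map_zero_eq_one])
    (by rw [← AddChar.map_add_eq_mul, neg_add_cancel, AddChar.map_zero_eq_one]))
  map_zero' := by
    apply Additive.toMul.injective; apply Units.ext; simp
  map_add' a b := by
    apply Additive.toMul.injective; apply Units.ext
    simp [AddChar.map_add_eq_mul]

lemma charToHom_val (χ : AddChar A ℂ) (a : A) : ((charToHom χ a).toMul : ℂ) = χ a := rfl

/-- Turn a hom into `Additive ℂˣ` into an additive character. -/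
def homToChar (G : A →+ Additive ℂˣ) : AddChar A ℂ where
  toFun a := ((G a).toMul : ℂ)
  map_zero_eq_one' := by simp
  map_add_eq_mul' a b := by simp

lemma homToChar_apply (G : A →+ Additive ℂˣ) (a : A) : homToChar G a = ((G a).toMul : ℂ) := rfl

/-- Every additive character of a subgroup of an abelian group extends to the whole group. -/
theorem addChar_extend (B : AddSubgroup A) (ψ : AddChar ↥B ℂ) :
    ∃ Ψ : AddChar A ℂ, ∀ b : ↥B, Ψ ↑b = ψ b := by
  obtain ⟨G, hG⟩ := addHom_extend B (charToHom ψ)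
  exact ⟨homToChar G, fun b => by
    rw [homToChar_apply, hG b, charToHom_val]⟩

end CharTools


section GenChar

variable {R : Type*} [Ring R] [Fintype R]

/-- The character `s ↦ χ (s * a)`. -/
def rmulChar (χ : AddChar R ℂ) (a : R) : AddChar R ℂ where
  toFun s := χ (s * a)
  map_zero_eq_one' := by simp
  map_add_eq_mul' s t := by
    show χ ((s + t) * a) = χ (s * a) * χ (t * a)
    rw [add_mul, AddChar.map_add_eq_mul]

lemma rmulChar_apply (χ : AddChar R ℂ) (a s : R) : rmulChar χ a s = χ (s * a) := rfl

variable {χ : AddChar R ℂ}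

/-- Cancellation via the generating character. -/
theorem gen_cancel (hχ : IsGeneratingChar χ) {a b : R}
    (h : ∀ s : R, χ (s * a) = χ (s * b)) : a = b := by
  obtain ⟨r, -, hr⟩ := hχ (rmulChar χ a)
  have h1 : a = r := hr a fun x => rfl
  have h2 : b = r := hr b fun x => h x
  rw [h1, h2]

/-- Every linear map from a left ideal to `R` is right multiplication by some element. -/
theorem hom_eq_mul (hχ : IsGeneratingChar χ) (I : Submodule R R) (φ : ↥I →ₗ[R] R) :
    ∃ r : R, ∀ x : ↥I, φ x = (x : R) * r := by
  have hmem : ∀ x : ↥I.toAddSubgroup, (x : R) ∈ I := fun x => x.2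
  set ψ₀ : AddChar ↥I.toAddSubgroup ℂ :=
    { toFun := fun x => χ (φ ⟨(x : R), hmem x⟩)
      map_zero_eq_one' := by
        show χ (φ ⟨(0 : R), _⟩) = 1
        have : (⟨(0 : R), hmem 0⟩ : ↥I) = 0 := by apply Subtype.ext; rfl
        rw [this, map_zero, AddChar.map_zero_eq_one]
      map_add_eq_mul' := fun x y => by
        show χ (φ ⟨((x + y : ↥I.toAddSubgroup) : R), _⟩) = _
        have : (⟨((x + y : ↥I.toAddSubgroup) : R), hmem (x + y)⟩ : ↥I)
            = ⟨(x : R), hmem x⟩ + ⟨(y : R), hmem y⟩ := by apply Subtype.ext; rfl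
        rw [this, map_add, AddChar.map_add_eq_mul] } with hψ₀
  have hψ₀app : ∀ x : ↥I.toAddSubgroup, ψ₀ x = χ (φ ⟨(x : R), hmem x⟩) := fun _ => rfl
  obtain ⟨Ψ, hΨ⟩ := addChar_extend I.toAddSubgroup ψ₀
  obtain ⟨r, hr, -⟩ := hχ Ψ
  refine ⟨r, fun x => ?_⟩
  apply gen_cancel hχ
  intro s
  have hsx : s • (x : R) ∈ I := I.smul_mem s x.2
  have hsx' : s • (x : R) ∈ I.toAddSubgroup := hsx
  have e1 : χ (φ ⟨s • (x : R), hsx⟩) = Ψ (s • (x : R)) := by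
    have h2 := hΨ ⟨s • (x : R), hsx'⟩
    rw [hψ₀app] at h2
    rw [h2]
  have e2 : φ ⟨s • (x : R), hsx⟩ = s * φ x := by
    have h3 : (⟨s • (x : R), hsx⟩ : ↥I) = s • x := by apply Subtype.ext; simp
    rw [h3, _root_.map_smul, smul_eq_mul]
  have e3 : s • (x : R) = s * (x : R) := by rw [smul_eq_mul]
  calc χ (s * φ x) = χ (φ ⟨s • (x : R), hsx⟩) := by rw [e2]
    _ = Ψ (s • (x : R)) := e1
    _ = χ ((s * (x : R)) * r) := by rw [e3, hr]
    _ = χ (s * ((x : R) * r)) := by rw [mul_assoc]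

theorem inj_hom_eq_unit (hχ : IsGeneratingChar χ) (I : Submodule R R) (φ : ↥I →ₗ[R] R)
    (hφ : Function.Injective φ) : ∃ u : Rˣ, ∀ x : ↥I, φ x = (x : R) * u := by
  have hfinsub : Finite (Submodule R R) :=
    Finite.of_injective (fun J => (J : Set R)) SetLike.coe_injective
  set S : Set (Submodule R R) :=
    {J | I ≤ J ∧ ∃ r, (∀ x : ↥I, φ x = (x : R) * r) ∧ ∀ z ∈ J, z * r = 0 → z = 0} with hS
  have hSne : S.Nonempty := by
    obtain ⟨r0, hr0⟩ := hom_eq_mul hχ I φ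
    refine ⟨I, le_refl I, r0, hr0, fun z hz h0 => ?_⟩
    have : φ ⟨z, hz⟩ = φ 0 := by rw [map_zero, hr0 ⟨z, hz⟩, h0]
    simpa using congrArg Subtype.val (hφ this)
  obtain ⟨I', hI'S, hmax⟩ : ∃ I' ∈ S, ∀ J ∈ S, I' ≤ J → I' = J := by
    obtain ⟨I', h1, h2⟩ := Set.Finite.exists_maximalFor id S (Set.toFinite S) hSne
    exact ⟨I', h1, fun J hJ hle => le_antisymm hle (h2 hJ hle)⟩
  obtain ⟨hII', r', hr'φ, hr'inj⟩ := hI'S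
  have htop : I' = ⊤ := by
    by_contra hne
    -- find a minimal extension J of I'
    have hTne : ({J | I' < J} : Set (Submodule R R)).Nonempty :=
      ⟨⊤, lt_top_iff_ne_top.mpr hne⟩
    obtain ⟨J, hltJ, hminJ⟩ : ∃ J ∈ {J | I' < J}, ∀ J' ∈ {J | I' < J}, J' ≤ J → J = J' := by
      obtain ⟨J, h1, h2⟩ := Set.Finite.exists_minimalFor id {J | I' < J} (Set.toFinite _) hTne
      exact ⟨J, h1, fun J' hJ' hle => le_antisymm (h2 hJ' hle) hle⟩
    set mulr' : R →ₗ[R] R := LinearMap.toSpanSingleton R R r' with hmulr'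
    have hmulr'apply : ∀ z : R, mulr' z = z * r' := fun z => by
      rw [hmulr', LinearMap.toSpanSingleton_apply, smul_eq_mul]
    set K : Submodule R R := LinearMap.ker mulr' ⊓ J with hK
    by_cases hKbot : K = ⊥
    · -- r' already injective on J
      have hJS : J ∈ S := by
        refine ⟨le_trans hII' hltJ.le, r', hr'φ, fun z hz h0 => ?_⟩
        have : z ∈ K := by
          rw [hK]
          exact ⟨by simpa [LinearMap.mem_ker, hmulr'apply] using h0, hz⟩
        rw [hKbot] at this
        simpa using this
      exact hltJ.ne (hmax J hJS hltJ.le)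
    · -- K is a simple complement of I' inside J
      have hKJ : K ≤ J := inf_le_right
      have hI'J : I' ≤ J := hltJ.le
      have hKI' : ∀ z, z ∈ K → z ∈ I' → z = 0 := fun z hzK hzI' =>
        hr'inj z hzI' (by
          have h1 := (Submodule.mem_inf.mp hzK).1
          rwa [LinearMap.mem_ker, hmulr'apply] at h1)
      have hKex : ∃ k, k ∈ K ∧ k ≠ 0 := by
        by_contra h
        push_neg at h
        exact hKbot (by
          ext z
          simp only [Submodule.mem_bot]
          exact ⟨fun hz => h z hz, fun hz => by simp [hz]⟩)
      have hsupT : ∀ K₀ : Submodule R R, K₀ ≤ K → K₀ ≠ ⊥ → I' ⊔ K₀ = J := by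
        intro K₀ hK₀K hK₀ne
        obtain ⟨k₀, hk₀, hk₀ne⟩ : ∃ k₀, k₀ ∈ K₀ ∧ k₀ ≠ 0 := by
          by_contra h
          push_neg at h
          exact hK₀ne (by
            ext z
            simp only [Submodule.mem_bot]
            exact ⟨fun hz => h z hz, fun hz => by simp [hz]⟩)
        have hk₀I' : k₀ ∉ I' := fun hmem => hk₀ne (hKI' k₀ (hK₀K hk₀) hmem)
        have h1 : I' < I' ⊔ K₀ := by
          refine lt_of_le_of_ne le_sup_left (fun h => hk₀I' ?_)
          rw [h]
          exact (le_sup_right : K₀ ≤ I' ⊔ K₀) hk₀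
        have h2 : I' ⊔ K₀ ≤ J := sup_le hI'J (le_trans hK₀K hKJ)
        exact (hminJ _ h1 h2).symm
      have hsup : I' ⊔ K = J := hsupT K le_rfl hKbot
      have hKsimple : ∀ K₀ : Submodule R R, K₀ ≤ K → K₀ ≠ ⊥ → K₀ = K := by
        intro K₀ hK₀K hK₀ne
        have hJ2 := hsupT K₀ hK₀K hK₀ne
        refine le_antisymm hK₀K (fun k hk => ?_)
        have : k ∈ I' ⊔ K₀ := by rw [hJ2]; exact hKJ hk
        obtain ⟨x, hx, k₀, hk₀, hxk⟩ := Submodule.mem_sup.mp this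
        have : k - k₀ ∈ K := K.sub_mem hk (hK₀K hk₀)
        have hzero : k - k₀ = 0 := hKI' _ this (by
          rw [← hxk]; simpa using hx)
        rwa [sub_eq_zero.mp hzero]
      set F : ↥I' →ₗ[R] R := mulr' ∘ₗ I'.subtype with hF
      have hFapply : ∀ x : ↥I', F x = (x : R) * r' := fun x => by
        rw [hF]; simp [hmulr'apply]
      have hFinj : Function.Injective F := by
        intro x y hxy
        apply Subtype.ext
        have : ((x : R) - y) * r' = 0 := by
          rw [sub_mul, sub_eq_zero, ← hFapply, ← hFapply, hxy]
        have := hr'inj _ (I'.sub_mem x.2 y.2) this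
        exact sub_eq_zero.mp this
      -- pigeonhole: some θ : K →ₗ R has range not inside range F
      have hex : ∃ θ : ↥K →ₗ[R] R, ¬(LinearMap.range θ ≤ LinearMap.range F) := by
        by_contra h
        push_neg at h
        set e := LinearEquiv.ofInjective F hFinj with he
        set Ψ : (↥K →ₗ[R] R) → (↥K →ₗ[R] R) := fun θ =>
          I'.subtype ∘ₗ e.symm.toLinearMap ∘ₗ
            (θ.codRestrict (LinearMap.range F) (fun k => h θ ⟨k, rfl⟩)) with hΨdef
        have key : ∀ y : LinearMap.range F, F (e.symm y) = ↑y := by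
          intro y
          have h2 := congrArg Subtype.val (e.apply_symm_apply y)
          rwa [LinearEquiv.ofInjective_apply] at h2
        have hrecover : ∀ (θ : ↥K →ₗ[R] R) (k : ↥K), mulr' (Ψ θ k) = θ k := fun θ k =>
          key ⟨θ k, h θ ⟨k, rfl⟩⟩
        have hΨinj : Function.Injective Ψ := by
          intro θ₁ θ₂ hθ
          ext k
          calc θ₁ k = mulr' (Ψ θ₁ k) := (hrecover θ₁ k).symm
            _ = mulr' (Ψ θ₂ k) := by rw [hθ]
            _ = θ₂ k := hrecover θ₂ k
        have hfin : Finite (↥K →ₗ[R] R) :=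
          Finite.of_injective (fun θ => (θ : ↥K → R)) DFunLike.coe_injective
        obtain ⟨θ₁, hθ₁⟩ := (Finite.injective_iff_surjective.mp hΨinj) K.subtype
        have hKle : ∀ k : ↥K, (k : R) ∈ I' := by
          intro k
          have h7 : Ψ θ₁ k = (k : R) := by rw [hθ₁]; rfl
          rw [← h7]
          exact (e.symm ((θ₁.codRestrict (LinearMap.range F)
            (fun k => h θ₁ ⟨k, rfl⟩)) k)).2
        obtain ⟨k, hkK, hkne⟩ := hKex
        exact hkne (hKI' k hkK (hKle ⟨k, hkK⟩))
      obtain ⟨θ, hθ⟩ := hex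
      have hKgood : ∀ k : ↥K, θ k ∈ LinearMap.range F → k = 0 := by
        intro k hk
        set K₁ : Submodule R R :=
          Submodule.map K.subtype (Submodule.comap θ (LinearMap.range F)) with hK₁
        have hK₁K : K₁ ≤ K := by
          rw [hK₁]
          rintro z ⟨w, -, rfl⟩
          exact w.2
        have hK₁ne : K₁ ≠ K := by
          intro hcontra
          apply hθ
          rintro y ⟨k', rfl⟩
          have : (k' : R) ∈ K₁ := by rw [hcontra]; exact k'.2
          obtain ⟨w, hw, hwk⟩ := this
          have : w = k' := Subtype.ext hwk
          rwa [← this]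
        have hK₁bot : K₁ = ⊥ := by
          by_contra h
          exact hK₁ne (hKsimple K₁ hK₁K h)
        have : (k : R) ∈ K₁ := ⟨k, hk, rfl⟩
        rw [hK₁bot] at this
        exact Subtype.ext (by simpa using this)
      -- realize θ as right multiplication by t with I' * t = 0
      set p : Submodule R ↥J := Submodule.comap J.subtype I' with hp
      set q : Submodule R ↥J := Submodule.comap J.subtype K with hq
      have hcompl : IsCompl p q := by
        apply IsCompl.of_eq
        · ext z
          simp only [Submodule.mem_inf, Submodule.mem_bot, hp, hq, Submodule.mem_comap,
            Submodule.coe_subtype]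
          constructor
          · rintro ⟨h1, h2⟩
            exact Subtype.ext (hKI' _ h2 h1)
          · rintro rfl
            simp
        · ext z
          simp only [Submodule.mem_top, iff_true]
          have : (z : R) ∈ I' ⊔ K := by rw [hsup]; exact z.2
          obtain ⟨x, hx, k, hk, hxk⟩ := Submodule.mem_sup.mp this
          refine Submodule.mem_sup.mpr ⟨⟨x, hI'J hx⟩, ?_, ⟨k, hKJ hk⟩, ?_, ?_⟩
          · simpa [hp] using hx
          · simpa [hq] using hk
          · exact Subtype.ext (by simpa using hxk)
      set eqv := Submodule.comapSubtypeEquivOfLe hKJ with heqv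
      set η : ↥J →ₗ[R] R := LinearMap.ofIsCompl hcompl 0 (θ ∘ₗ eqv.toLinearMap) with hη
      obtain ⟨t, ht⟩ := hom_eq_mul hχ J η
      have htI' : ∀ x, x ∈ I' → x * t = 0 := by
        intro x hx
        have hu : (⟨x, hI'J hx⟩ : ↥J) ∈ p := by simpa [hp] using hx
        have h0 : x * t = η ⟨x, hI'J hx⟩ := (ht ⟨x, hI'J hx⟩).symm
        rw [h0, hη]
        have h1 := LinearMap.ofIsCompl_left_apply hcompl (φ := (0 : ↥p →ₗ[R] R))
          (ψ := θ ∘ₗ eqv.toLinearMap) ⟨⟨x, hI'J hx⟩, hu⟩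
        simpa using h1
      have htK : ∀ k : ↥K, (k : R) * t = θ k := by
        intro k
        have hv : (⟨(k : R), hKJ k.2⟩ : ↥J) ∈ q := by simpa [hq] using k.2
        have h0 : (k : R) * t = η ⟨(k : R), hKJ k.2⟩ := (ht ⟨(k : R), hKJ k.2⟩).symm
        rw [h0, hη]
        have h1 := LinearMap.ofIsCompl_right_apply hcompl (φ := (0 : ↥p →ₗ[R] R))
          (ψ := θ ∘ₗ eqv.toLinearMap) ⟨⟨(k : R), hKJ k.2⟩, hv⟩
        have h8 : (eqv ⟨⟨(k : R), hKJ k.2⟩, hv⟩ : ↥K) = k := Subtype.ext rfl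
        rw [h1]
        simp only [LinearMap.comp_apply, LinearEquiv.coe_toLinearMap]
        rw [h8]
      -- J with r' + t contradicts maximality
      have hJS : J ∈ S := by
        refine ⟨le_trans hII' hI'J, r' + t, fun x => ?_, fun z hz h0 => ?_⟩
        · rw [mul_add, htI' _ (hII' x.2), add_zero]
          exact hr'φ x
        · have : z ∈ I' ⊔ K := by rw [hsup]; exact hz
          obtain ⟨x, hx, k, hk, hxk⟩ := Submodule.mem_sup.mp this
          have hkr' : k * r' = 0 := by
            have h1 := (Submodule.mem_inf.mp hk).1
            rwa [LinearMap.mem_ker, hmulr'apply] at h1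
          have hexp : x * r' + k * t = 0 := by
            have h1 : (x + k) * (r' + t) = 0 := by rw [hxk]; exact h0
            rw [add_mul, mul_add, mul_add, htI' x hx, hkr'] at h1
            simpa using h1
          have h5 : θ ⟨k, hk⟩ = k * t := (htK ⟨k, hk⟩).symm
          have hmem : θ ⟨k, hk⟩ ∈ LinearMap.range F := by
            refine ⟨⟨-x, I'.neg_mem hx⟩, ?_⟩
            have h6 : F ⟨-x, I'.neg_mem hx⟩ = -x * r' := hFapply _
            rw [h6, h5, neg_mul, neg_eq_iff_add_eq_zero]
            exact hexp
          have hk0 : (⟨k, hk⟩ : ↥K) = 0 := hKgood _ hmem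
          have hk0' : k = 0 := by simpa using congrArg Subtype.val hk0
          have hx0 : x = 0 := by
            apply hr'inj x hx
            rw [hk0', zero_mul, add_zero] at hexp
            exact hexp
          rw [← hxk, hx0, hk0', add_zero]
      have : I' = J := hmax J hJS hI'J
      exact hltJ.ne this
  -- now r' is left-regular, hence a unit
  have hreg : ∀ z : R, z * r' = 0 → z = 0 := fun z hz =>
    hr'inj z (htop ▸ Submodule.mem_top) hz
  have hinj : Function.Injective (fun z : R => z * r') := fun x y hxy => by
    have h : (x - y) * r' = 0 := by
      rw [sub_mul, sub_eq_zero]; exact hxy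
    exact sub_eq_zero.mp (hreg _ h)
  obtain ⟨v, hv⟩ := Finite.injective_iff_surjective.mp hinj 1
  have hv' : v * r' = 1 := hv
  have hrv : r' * v = 1 := by
    have h : (r' * v - 1) * r' = 0 := by
      rw [sub_mul, one_mul, mul_assoc, hv', mul_one, sub_self]
    exact sub_eq_zero.mp (hreg _ h)
  exact ⟨⟨r', v, hrv, hv'⟩, fun x => hr'φ x⟩

end GenChar


section Weights

variable {R : Type*} [Ring R]

lemma wtRT_le_iff {n k : ℕ} (x : Fin n → R) :
    wtRT x ≤ k ↔ ∀ i : Fin n, k ≤ (i : ℕ) → x i = 0 := by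
  unfold wtRT
  rw [Finset.sup_le_iff]
  constructor
  · intro h i hk
    by_contra hxi
    have := h i (by simp [hxi])
    omega
  · intro h i hi
    simp only [Finset.mem_filter, Finset.mem_univ, true_and] at hi
    by_contra hik
    push_neg at hik
    exact hi (h i (by omega))

lemma le_wtRT {n : ℕ} {x : Fin n → R} {i : Fin n} (h : x i ≠ 0) :
    (i : ℕ) + 1 ≤ wtRT x :=
  Finset.le_sup (f := fun i : Fin n => (i : ℕ) + 1)
    (by simp only [Finset.mem_filter, Finset.mem_univ, true_and]; exact h)

/-- The linear map given by right multiplication by a matrix. -/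
def vecMulLM {m k : ℕ} (M : Matrix (Fin m) (Fin k) R) : (Fin m → R) →ₗ[R] (Fin k → R) where
  toFun x := x ᵥ* M
  map_add' x y := Matrix.add_vecMul M x y
  map_smul' c x := Matrix.smul_vecMul c x M

lemma vecMulLM_apply {m k : ℕ} (M : Matrix (Fin m) (Fin k) R) (x : Fin m → R) :
    vecMulLM M x = x ᵥ* M := rfl

lemma wtRT_vecMul_le {n : ℕ} (x : Fin n → R) (A : Matrix (Fin n) (Fin n) R)
    (hA : ∀ i j : Fin n, i < j → A i j = 0) : wtRT (x ᵥ* A) ≤ wtRT x := by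
  rw [wtRT_le_iff]
  intro j hj
  show Finset.univ.sum (fun i => x i * A i j) = 0
  apply Finset.sum_eq_zero
  intro i _
  by_cases hxi : x i = 0
  · rw [hxi, zero_mul]
  · have h1 := le_wtRT hxi
    have h2 : i < j := by
      rw [Fin.lt_def]
      omega
    rw [hA i j h2, mul_zero]

end Weights

section MainInd

variable {R : Type*} [Ring R] [Fintype R] {χ : AddChar R ℂ}

theorem main_ind (hχ : IsGeneratingChar χ) (n : ℕ) :
    ∀ (C : Submodule R (Fin n → R)) (f : ↥C →ₗ[R] (Fin n → R)),
      (∀ x : ↥C, wtRT (f x) = wtRT (x : Fin n → R)) →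
      ∃ A B : Matrix (Fin n) (Fin n) R,
        (∀ i j : Fin n, i < j → A i j = 0) ∧ (∀ i j : Fin n, i < j → B i j = 0) ∧
        A * B = 1 ∧ B * A = 1 ∧ ∀ x : ↥C, f x = (x : Fin n → R) ᵥ* A := by
  induction n with
  | zero =>
    intro C f _
    refine ⟨1, 1, fun i => i.elim0, fun i => i.elim0, by simp, by simp, fun x => ?_⟩
    funext i
    exact i.elim0
  | succ n ih =>
    intro C f hf
    set π : (Fin (n + 1) → R) →ₗ[R] (Fin n → R) := LinearMap.funLeft R R Fin.castSucc with hπdef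
    set ι : (Fin n → R) →ₗ[R] (Fin (n + 1) → R) :=
      LinearMap.pi (fun j : Fin (n + 1) =>
        Fin.lastCases (0 : (Fin n → R) →ₗ[R] R) (fun i => LinearMap.proj i) j) with hιdef
    have hπa : ∀ (v : Fin (n + 1) → R) (i : Fin n), π v i = v (Fin.castSucc i) := fun v i => rfl
    have hιlast : ∀ w : Fin n → R, ι w (Fin.last n) = 0 := by
      intro w
      rw [hιdef]
      simp [LinearMap.pi_apply]
    have hιcast : ∀ (w : Fin n → R) (i : Fin n), ι w (Fin.castSucc i) = w i := by
      intro w i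
      rw [hιdef]
      simp [LinearMap.pi_apply]
    have hwι : ∀ w : Fin n → R, wtRT (ι w) = wtRT w := by
      intro w
      apply le_antisymm
      · rw [wtRT_le_iff]
        intro i hi
        rcases Fin.eq_castSucc_or_eq_last i with ⟨i', rfl⟩ | rfl
        · rw [hιcast]
          by_contra hne
          have h20 := le_wtRT hne
          simp only [Fin.coe_castSucc] at hi
          omega
        · exact hιlast w
      · rw [wtRT_le_iff]
        intro i hi
        by_contra hne
        have h1 : ι w (Fin.castSucc i) ≠ 0 := by rw [hιcast]; exact hne
        have := le_wtRT h1
        simp only [Fin.coe_castSucc] at this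
        omega
    have hlastiff : ∀ v : Fin (n + 1) → R, v (Fin.last n) = 0 ↔ wtRT v ≤ n := by
      intro v
      constructor
      · intro hv
        rw [wtRT_le_iff]
        intro i hi
        have : i = Fin.last n := by
          apply Fin.ext
          have := i.isLt
          simp only [Fin.val_last]
          omega
        rw [this]
        exact hv
      · intro hv
        rw [wtRT_le_iff] at hv
        exact hv (Fin.last n) (by simp)
    have hπι : ∀ v : Fin (n + 1) → R, v (Fin.last n) = 0 → ι (π v) = v := by
      intro v hv
      funext j
      refine Fin.lastCases ?_ ?_ j
      · rw [hιlast, hv]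
      · intro i
        rw [hιcast, hπa]
    set C' : Submodule R (Fin n → R) := Submodule.comap ι C with hC'def
    set e : ↥C' →ₗ[R] ↥C := (ι ∘ₗ C'.subtype).codRestrict C (fun x => x.2) with hedef
    have hea : ∀ x : ↥C', (e x : Fin (n + 1) → R) = ι (x : Fin n → R) := fun x => rfl
    set f' : ↥C' →ₗ[R] (Fin n → R) := π ∘ₗ f ∘ₗ e with hf'def
    have hf'a : ∀ x : ↥C', f' x = π (f (e x)) := fun x => rfl
    have hfx_last : ∀ x : ↥C, (x : Fin (n + 1) → R) (Fin.last n) = 0 →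
        f x (Fin.last n) = 0 := by
      intro x hx
      have h1 : wtRT (f x) ≤ n := by
        rw [hf x]
        exact (hlastiff _).1 hx
      exact (hlastiff _).2 h1
    have hf'w : ∀ x : ↥C', wtRT (f' x) = wtRT (x : Fin n → R) := by
      intro x
      have h1 : (e x : Fin (n + 1) → R) (Fin.last n) = 0 := by
        rw [hea]; exact hιlast _
      have h2 : f (e x) (Fin.last n) = 0 := hfx_last _ h1
      have h3 : ι (π (f (e x))) = f (e x) := hπι _ h2
      calc wtRT (f' x) = wtRT (ι (f' x)) := (hwι _).symm
        _ = wtRT (f (e x)) := by rw [hf'a, h3]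
        _ = wtRT ((e x : Fin (n + 1) → R)) := hf (e x)
        _ = wtRT (ι (x : Fin n → R)) := by rw [hea]
        _ = wtRT ((x : Fin n → R)) := hwι _
    obtain ⟨A', B', hA'low, hB'low, hAB', hBA', hA'f⟩ := ih C' f' hf'w
    -- the ideal of last coordinates
    set pr : ↥C →ₗ[R] R := (LinearMap.proj (Fin.last n)) ∘ₗ C.subtype with hprdef
    have hpra : ∀ x : ↥C, pr x = (x : Fin (n + 1) → R) (Fin.last n) := fun x => rfl
    set Ilast : Submodule R R := LinearMap.range pr with hIdef
    set L : ↥C →ₗ[R] R := (LinearMap.proj (Fin.last n)) ∘ₗ f with hLdef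
    have hLa : ∀ x : ↥C, L x = f x (Fin.last n) := fun x => rfl
    have hkerL : LinearMap.ker pr ≤ LinearMap.ker L := by
      intro x hx
      rw [LinearMap.mem_ker] at hx ⊢
      rw [hLa]
      exact hfx_last x hx
    set lam : ↥Ilast →ₗ[R] R :=
      (Submodule.liftQ (LinearMap.ker pr) L hkerL) ∘ₗ
        (LinearMap.quotKerEquivRange pr).symm.toLinearMap with hlamdef
    have hlam : ∀ x : ↥C, lam ⟨pr x, LinearMap.mem_range_self pr x⟩ = L x := by
      intro x
      rw [hlamdef]
      simp only [LinearMap.comp_apply, LinearEquiv.coe_toLinearMap]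
      have h1 : (LinearMap.quotKerEquivRange pr).symm ⟨pr x, LinearMap.mem_range_self pr x⟩
          = Submodule.Quotient.mk x := by
        have := LinearMap.quotKerEquivRange_symm_apply_image pr x (LinearMap.mem_range_self pr x)
        rwa [Submodule.mkQ_apply] at this
      rw [h1]
      exact Submodule.liftQ_apply _ L x
    have hlaminj : Function.Injective lam := by
      rw [injective_iff_map_eq_zero]
      intro a ha
      obtain ⟨x, hx⟩ := a.2
      have ha' : L x = 0 := by
        rw [← hlam x]
        have hax : (⟨pr x, LinearMap.mem_range_self pr x⟩ : ↥Ilast) = a := Subtype.ext hx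
        rw [hax]
        exact ha
      have h1 : wtRT ((x : Fin (n + 1) → R)) ≤ n := by
        rw [← hf x]
        apply (hlastiff _).1
        exact ha'
      have h2 : (x : Fin (n + 1) → R) (Fin.last n) = 0 := (hlastiff _).2 h1
      apply Subtype.ext
      rw [← hx]
      exact h2
    obtain ⟨u, hu⟩ := inj_hom_eq_unit hχ Ilast lam hlaminj
    -- the defect map
    set D : ↥C →ₗ[R] (Fin n → R) :=
      (π ∘ₗ f) - ((vecMulLM A') ∘ₗ π ∘ₗ C.subtype) with hDdef
    have hDa : ∀ x : ↥C, D x = π (f x) - (π (x : Fin (n + 1) → R)) ᵥ* A' := fun x => rfl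
    have hkerD : LinearMap.ker pr ≤ LinearMap.ker D := by
      intro x hx
      rw [LinearMap.mem_ker] at hx ⊢
      have hxlast : (x : Fin (n + 1) → R) (Fin.last n) = 0 := hx
      have hιπx : ι (π (x : Fin (n + 1) → R)) = x := hπι _ hxlast
      have hmem : π (x : Fin (n + 1) → R) ∈ C' := by
        show ι _ ∈ C
        rw [hιπx]
        exact x.2
      have hex : e ⟨π (x : Fin (n + 1) → R), hmem⟩ = x := by
        apply Subtype.ext
        rw [hea]
        exact hιπx
      have h5 := hA'f ⟨π (x : Fin (n + 1) → R), hmem⟩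
      rw [hf'a, hex] at h5
      rw [hDa, h5]
      simp
    set mu : ↥Ilast →ₗ[R] (Fin n → R) :=
      (Submodule.liftQ (LinearMap.ker pr) D hkerD) ∘ₗ
        (LinearMap.quotKerEquivRange pr).symm.toLinearMap with hmudef
    have hmu : ∀ x : ↥C, mu ⟨pr x, LinearMap.mem_range_self pr x⟩ = D x := by
      intro x
      rw [hmudef]
      simp only [LinearMap.comp_apply, LinearEquiv.coe_toLinearMap]
      have h1 : (LinearMap.quotKerEquivRange pr).symm ⟨pr x, LinearMap.mem_range_self pr x⟩
          = Submodule.Quotient.mk x := by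
        have := LinearMap.quotKerEquivRange_symm_apply_image pr x (LinearMap.mem_range_self pr x)
        rwa [Submodule.mkQ_apply] at this
      rw [h1]
      exact Submodule.liftQ_apply _ D x
    have hmuj := fun j : Fin n => hom_eq_mul hχ Ilast ((LinearMap.proj j) ∘ₗ mu)
    choose m hm using hmuj
    -- assemble the matrices
    set mv : Fin n → R := m with hmvdef
    set rowB : Fin n → R := fun j => -(((u⁻¹ : Rˣ) : R) * (mv ᵥ* B') j) with hrowBdef
    set A : Matrix (Fin (n + 1)) (Fin (n + 1)) R := fun i j =>
      Fin.lastCases (Fin.lastCases ((u : R)) (fun j' => m j') j)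
        (fun i' => Fin.lastCases (0 : R) (fun j' => A' i' j') j) i with hAdef
    set B : Matrix (Fin (n + 1)) (Fin (n + 1)) R := fun i j =>
      Fin.lastCases (Fin.lastCases (((u⁻¹ : Rˣ) : R)) (fun j' => rowB j') j)
        (fun i' => Fin.lastCases (0 : R) (fun j' => B' i' j') j) i with hBdef
    have hA1 : A (Fin.last n) (Fin.last n) = (u : R) := by simp [hAdef]
    have hA2 : ∀ j', A (Fin.last n) (Fin.castSucc j') = m j' := by intro j'; simp [hAdef]
    have hA3 : ∀ i', A (Fin.castSucc i') (Fin.last n) = 0 := by intro i'; simp [hAdef]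
    have hA4 : ∀ i' j', A (Fin.castSucc i') (Fin.castSucc j') = A' i' j' := by
      intro i' j'; simp [hAdef]
    have hB1 : B (Fin.last n) (Fin.last n) = ((u⁻¹ : Rˣ) : R) := by simp [hBdef]
    have hB2 : ∀ j', B (Fin.last n) (Fin.castSucc j') = rowB j' := by intro j'; simp [hBdef]
    have hB3 : ∀ i', B (Fin.castSucc i') (Fin.last n) = 0 := by intro i'; simp [hBdef]
    have hB4 : ∀ i' j', B (Fin.castSucc i') (Fin.castSucc j') = B' i' j' := by
      intro i' j'; simp [hBdef]
    have hAlow : ∀ i j : Fin (n + 1), i < j → A i j = 0 := by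
      intro i j hij
      rcases Fin.eq_castSucc_or_eq_last i with ⟨i', rfl⟩ | rfl <;>
        rcases Fin.eq_castSucc_or_eq_last j with ⟨j', rfl⟩ | rfl
      · rw [hA4]
        exact hA'low i' j' (by rwa [Fin.castSucc_lt_castSucc_iff] at hij)
      · exact hA3 i'
      · exfalso
        rw [Fin.lt_def] at hij
        simp only [Fin.val_last, Fin.coe_castSucc] at hij
        have := j'.isLt
        omega
      · exact absurd hij (lt_irrefl _)
    have hBlow : ∀ i j : Fin (n + 1), i < j → B i j = 0 := by
      intro i j hij
      rcases Fin.eq_castSucc_or_eq_last i with ⟨i', rfl⟩ | rfl <;>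
        rcases Fin.eq_castSucc_or_eq_last j with ⟨j', rfl⟩ | rfl
      · rw [hB4]
        exact hB'low i' j' (by rwa [Fin.castSucc_lt_castSucc_iff] at hij)
      · exact hB3 i'
      · exfalso
        rw [Fin.lt_def] at hij
        simp only [Fin.val_last, Fin.coe_castSucc] at hij
        have := j'.isLt
        omega
      · exact absurd hij (lt_irrefl _)
    have hsmallA : ∀ (w : Fin n → R) (j' : Fin n), (w ᵥ* A') j' = ∑ k', w k' * A' k' j' := by
      intro w j'
      simp [Matrix.vecMul, dotProduct]
    have hsmallB : ∀ (w : Fin n → R) (j' : Fin n), (w ᵥ* B') j' = ∑ k', w k' * B' k' j' := by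
      intro w j'
      simp [Matrix.vecMul, dotProduct]
    have hmulsplit : ∀ (M N : Matrix (Fin (n + 1)) (Fin (n + 1)) R) (i j : Fin (n + 1)),
        (M * N) i j = (∑ k' : Fin n, M i (Fin.castSucc k') * N (Fin.castSucc k') j)
          + M i (Fin.last n) * N (Fin.last n) j := by
      intro M N i j
      rw [Matrix.mul_apply, Fin.sum_univ_castSucc]
    have hrowB_eq : rowB = -(((u⁻¹ : Rˣ) : R) • (mv ᵥ* B')) := by
      funext j'
      simp [hrowBdef, smul_eq_mul]
    have hrowBA : rowB ᵥ* A' = -(((u⁻¹ : Rˣ) : R) • mv) := by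
      rw [hrowB_eq, Matrix.neg_vecMul, Matrix.smul_vecMul, Matrix.vecMul_vecMul, hBA',
        Matrix.vecMul_one]
    have hABone : A * B = 1 := by
      ext i j
      rcases Fin.eq_castSucc_or_eq_last i with ⟨i', rfl⟩ | rfl <;>
        rcases Fin.eq_castSucc_or_eq_last j with ⟨j', rfl⟩ | rfl
      · rw [hmulsplit]
        simp only [hA3, hA4, hB4, zero_mul, add_zero]
        have h9 : ∑ k' : Fin n, A' i' k' * B' k' j' = (A' * B') i' j' :=
          (Matrix.mul_apply).symm
        rw [h9, hAB']
        by_cases hij : i' = j'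
        · subst hij
          rw [Matrix.one_apply_eq, Matrix.one_apply_eq]
        · rw [Matrix.one_apply_ne hij,
            Matrix.one_apply_ne (fun h => hij (by rwa [Fin.castSucc_inj] at h))]
      · rw [hmulsplit]
        simp only [hA3, hA4, hB3, mul_zero, zero_mul, Finset.sum_const_zero, add_zero]
        rw [Matrix.one_apply_ne (Fin.castSucc_lt_last i').ne]
      · rw [hmulsplit]
        simp only [hA2, hB4, hA1, hB2]
        have h10 : ∑ k' : Fin n, m k' * B' k' j' = (mv ᵥ* B') j' := (hsmallB mv j').symm
        rw [h10, hrowBdef]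
        rw [Matrix.one_apply_ne (Fin.castSucc_lt_last j').ne']
        rw [mul_neg, ← mul_assoc, Units.mul_inv, one_mul, add_neg_cancel]
      · rw [hmulsplit]
        simp only [hA2, hB3, mul_zero, Finset.sum_const_zero, zero_add, hA1, hB1]
        rw [Units.mul_inv, Matrix.one_apply_eq]
    have hBAone : B * A = 1 := by
      ext i j
      rcases Fin.eq_castSucc_or_eq_last i with ⟨i', rfl⟩ | rfl <;>
        rcases Fin.eq_castSucc_or_eq_last j with ⟨j', rfl⟩ | rfl
      · rw [hmulsplit]
        simp only [hB3, hB4, hA4, zero_mul, add_zero]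
        have h9 : ∑ k' : Fin n, B' i' k' * A' k' j' = (B' * A') i' j' :=
          (Matrix.mul_apply).symm
        rw [h9, hBA']
        by_cases hij : i' = j'
        · subst hij
          rw [Matrix.one_apply_eq, Matrix.one_apply_eq]
        · rw [Matrix.one_apply_ne hij,
            Matrix.one_apply_ne (fun h => hij (by rwa [Fin.castSucc_inj] at h))]
      · rw [hmulsplit]
        simp only [hB3, hB4, hA3, mul_zero, zero_mul, Finset.sum_const_zero, add_zero]
        rw [Matrix.one_apply_ne (Fin.castSucc_lt_last i').ne]
      · rw [hmulsplit]
        simp only [hB2, hA4, hB1, hA2]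
        have h11 : ∑ k' : Fin n, rowB k' * A' k' j' = (rowB ᵥ* A') j' := (hsmallA rowB j').symm
        rw [h11, hrowBA]
        rw [Matrix.one_apply_ne (Fin.castSucc_lt_last j').ne']
        simp only [Pi.neg_apply, Pi.smul_apply, smul_eq_mul, hmvdef]
        rw [neg_add_cancel]
      · rw [hmulsplit]
        simp only [hB2, hA3, mul_zero, Finset.sum_const_zero, zero_add, hB1, hA1]
        rw [Units.inv_mul, Matrix.one_apply_eq]
    have hvmsplit : ∀ (v : Fin (n + 1) → R) (j : Fin (n + 1)),
        (v ᵥ* A) j = (∑ k' : Fin n, v (Fin.castSucc k') * A (Fin.castSucc k') j)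
          + v (Fin.last n) * A (Fin.last n) j := by
      intro v j
      show Finset.univ.sum (fun k => v k * A k j) = _
      rw [Fin.sum_univ_castSucc]
    have hfinal : ∀ x : ↥C, f x = (x : Fin (n + 1) → R) ᵥ* A := by
      intro x
      funext j
      rcases Fin.eq_castSucc_or_eq_last j with ⟨j', rfl⟩ | rfl
      · rw [hvmsplit]
        simp only [hA4, hA2]
        have hDj : D x j' = pr x * m j' := by
          rw [← hmu x]
          exact hm j' ⟨pr x, LinearMap.mem_range_self pr x⟩
        have h12 : D x j' = f x (Fin.castSucc j') - (π (x : Fin (n + 1) → R) ᵥ* A') j' := by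
          rw [hDa]
          rfl
        have h15 : f x (Fin.castSucc j') - (π (x : Fin (n + 1) → R) ᵥ* A') j' = pr x * m j' :=
          h12.symm.trans hDj
        rw [sub_eq_iff_eq_add] at h15
        rw [h15, add_comm]
        have h16 : (π (x : Fin (n + 1) → R) ᵥ* A') j'
            = ∑ k' : Fin n, (x : Fin (n + 1) → R) (Fin.castSucc k') * A' k' j' := hsmallA _ j'
        rw [h16]
        rfl
      · rw [hvmsplit]
        simp only [hA3, mul_zero, Finset.sum_const_zero, zero_add, hA1]
        have h13 : f x (Fin.last n) = lam ⟨pr x, LinearMap.mem_range_self pr x⟩ := by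
          rw [← hLa]
          exact (hlam x).symm
        have h14 := hu ⟨pr x, LinearMap.mem_range_self pr x⟩
        rw [h13, h14]
        rfl
    exact ⟨A, B, hAlow, hBlow, hABone, hBAone, hfinal⟩

end MainInd


/-- **Extension theorem for the Rosenbloom–Tsfasman weight.**  Over a finite Frobenius
ring `R`, every left `R`-linear `wt_RT`-preserving map `f : C → R^n` on a code
`C ⊆ R^n` is a global `LT(n,R)`-map; in particular it extends to a `wt_RT`-preserving
`R`-linear automorphism of `R^n`. -/
theorem RT_extension {R : Type*} [Ring R] [Fintype R] (hR : IsFrobeniusRing R)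
    {n : ℕ} (C : Submodule R (Fin n → R)) (f : C →ₗ[R] (Fin n → R))
    (hf : ∀ x : C, wtRT (f x) = wtRT (x : Fin n → R)) :
    (∃ M : (Matrix (Fin n) (Fin n) R)ˣ,
      (∀ i j : Fin n, i < j → M.val i j = 0) ∧
      ∀ x : C, f x = (x : Fin n → R) ᵥ* M.val) ∧
    (∃ g : (Fin n → R) ≃ₗ[R] (Fin n → R),
      (∀ v : Fin n → R, wtRT (g v) = wtRT v) ∧
      ∀ x : C, g (x : Fin n → R) = f x) := by
  obtain ⟨χ, hχ⟩ := hR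
  obtain ⟨A, B, hAlow, hBlow, hAB, hBA, hfA⟩ := main_ind hχ n C f hf
  constructor
  · exact ⟨⟨A, B, hAB, hBA⟩, hAlow, fun x => hfA x⟩
  · set g : (Fin n → R) ≃ₗ[R] (Fin n → R) := LinearEquiv.ofLinear (vecMulLM A) (vecMulLM B)
      (by
        apply LinearMap.ext
        intro v
        show (v ᵥ* B) ᵥ* A = v
        rw [Matrix.vecMul_vecMul, hBA, Matrix.vecMul_one])
      (by
        apply LinearMap.ext
        intro v
        show (v ᵥ* A) ᵥ* B = v
        rw [Matrix.vecMul_vecMul, hAB, Matrix.vecMul_one]) with hgdef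
    have hg : ∀ v, g v = v ᵥ* A := fun v => rfl
    refine ⟨g, fun v => ?_, fun x => ?_⟩
    · apply le_antisymm
      · rw [hg]
        exact wtRT_vecMul_le v A hAlow
      · have h1 : (v ᵥ* A) ᵥ* B = v := by
          rw [Matrix.vecMul_vecMul, hAB, Matrix.vecMul_one]
        calc wtRT v = wtRT ((v ᵥ* A) ᵥ* B) := by rw [h1]
          _ ≤ wtRT (v ᵥ* A) := wtRT_vecMul_le _ B hBlow
          _ = wtRT (g v) := by rw [hg]
    · rw [hg, hfA x]
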